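/- Consider the one-dimensional sine-Gordon equation ∂_{tt}u - ∂_{xx}u = sin(u) on the torus Ω = [0,1] with initial data u(0) = u₀ ∈ BV(Ω) ∩ L^∞(Ω) and ∂_t u(0) = v₀ ∈ M(Ω) (a finite Borel measure). Then u(t) ∈ BV(Ω) ∩ L^∞(Ω) for all t ∈ [0,T], and ‖u(t)‖_{BV} + ‖u(t)‖_{L^∞} ≲ T² + ‖u₀‖_{BV} + ‖u₀‖_{L^∞} + ‖v₀‖_{M}. -/

import Mathlib

open MeasureTheory ENNReal

noncomputable section

/-- BV norm on the 1D torus (for 1-periodic functions on ℝ): L¹ norm over one period plus the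
variation over one period. -/
def bvNormR (w : ℝ → ℝ) : ℝ≥0∞ :=
  (∫⁻ x in Set.Ioc (0:ℝ) 1, (‖w x‖₊ : ℝ≥0∞)) + eVariationOn w (Set.Icc 0 1)

/-- The sup norm of a function on ℝ. -/
def supNormR (w : ℝ → ℝ) : ℝ≥0∞ := ⨆ x : ℝ, (‖w x‖₊ : ℝ≥0∞)

open Set

lemma tv_ne_top (v : SignedMeasure ℝ) (A : Set ℝ) : v.totalVariation A ≠ ⊤ := by
  have h : v.totalVariation A ≤ v.totalVariation univ := measure_mono (subset_univ A)
  refine ne_top_of_le_ne_top ?_ h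
  rw [SignedMeasure.totalVariation, Measure.add_apply]
  exact ENNReal.add_ne_top.2 ⟨measure_ne_top _ _, measure_ne_top _ _⟩

lemma abs_sm_le (v : SignedMeasure ℝ) (A : Set ℝ) (hA : MeasurableSet A) :
    ENNReal.ofReal |v A| ≤ v.totalVariation A := by
  conv_lhs => rw [← v.toSignedMeasure_toJordanDecomposition]
  set j := v.toJordanDecomposition
  rw [SignedMeasure.totalVariation, Measure.add_apply, JordanDecomposition.toSignedMeasure,
    VectorMeasure.sub_apply, Measure.toSignedMeasure_apply_measurable hA,
    Measure.toSignedMeasure_apply_measurable hA]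
  have h1 : |(j.posPart A).toReal - (j.negPart A).toReal|
      ≤ (j.posPart A).toReal + (j.negPart A).toReal := by
    have := ENNReal.toReal_nonneg (a := j.posPart A)
    have := ENNReal.toReal_nonneg (a := j.negPart A)
    rw [abs_sub_le_iff]; constructor <;> linarith
  calc ENNReal.ofReal |(j.posPart A).toReal - (j.negPart A).toReal|
      ≤ ENNReal.ofReal ((j.posPart A).toReal + (j.negPart A).toReal) :=
        ENNReal.ofReal_le_ofReal h1
    _ = j.posPart A + j.negPart A := by
        rw [ENNReal.ofReal_add ENNReal.toReal_nonneg ENNReal.toReal_nonneg,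
          ENNReal.ofReal_toReal (measure_ne_top _ _), ENNReal.ofReal_toReal (measure_ne_top _ _)]

lemma sm_Ioc_add (v : SignedMeasure ℝ) {a b c : ℝ} (hab : a ≤ b) (hbc : b ≤ c) :
    v (Ioc a c) = v (Ioc a b) + v (Ioc b c) := by
  rw [← Ioc_union_Ioc_eq_Ioc hab hbc,
    v.of_union (Ioc_disjoint_Ioc_of_le le_rfl) measurableSet_Ioc measurableSet_Ioc]

lemma sum_measure_Ioc (μ : Measure ℝ) {a : ℕ → ℝ} (ha : Monotone a) (n : ℕ) :
    ∑ i ∈ Finset.range n, μ (Ioc (a i) (a (i+1))) = μ (Ioc (a 0) (a n)) := by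
  induction n with
  | zero => simp
  | succ n ih =>
    rw [Finset.sum_range_succ, ih,
      ← measure_union (Ioc_disjoint_Ioc_of_le le_rfl) measurableSet_Ioc,
      Ioc_union_Ioc_eq_Ioc (ha (Nat.zero_le n)) (ha (Nat.le_succ n))]

lemma evar_shift (u0 : ℝ → ℝ) (hper : ∀ x, u0 (x+1) = u0 x) (k : ℤ) (a b : ℝ) :
    eVariationOn u0 (Icc (a + k) (b + k)) = eVariationOn u0 (Icc a b) := by
  have hp : Function.Periodic u0 1 := hper
  have hpk : ∀ x : ℝ, u0 (x + k) = u0 x := by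
    intro x
    simpa using (hp.int_mul k) x
  have hφ : MonotoneOn (fun x : ℝ => x + (k:ℝ)) (Icc a b) := fun x _ y _ h => by simpa using h
  have h2 := eVariationOn.comp_eq_of_monotoneOn u0 (fun x : ℝ => x + (k:ℝ)) hφ
  rw [show u0 ∘ (fun x : ℝ => x + (k:ℝ)) = u0 from funext hpk] at h2
  rw [h2, Set.image_add_const_Icc]

lemma evar_window (u0 : ℝ → ℝ) (hper : ∀ x, u0 (x+1) = u0 x) (a : ℝ) :
    eVariationOn u0 (Icc a (a+1)) ≤ 2 * eVariationOn u0 (Icc 0 1) := by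
  set k : ℤ := ⌊a⌋ with hk
  have h1 : Icc a (a+1) ⊆ Icc (k:ℝ) ((k:ℝ)+2) :=
    Icc_subset_Icc (Int.floor_le a) (by have := Int.lt_floor_add_one a; linarith)
  have hunion : Icc (k:ℝ) ((k:ℝ)+2) = Icc (k:ℝ) ((k:ℝ)+1) ∪ Icc ((k:ℝ)+1) ((k:ℝ)+2) :=
    (Icc_union_Icc_eq_Icc (by linarith) (by linarith)).symm
  have hg : IsGreatest (Icc (k:ℝ) ((k:ℝ)+1)) ((k:ℝ)+1) :=
    ⟨right_mem_Icc.2 (by linarith), fun y hy => hy.2⟩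
  have hl : IsLeast (Icc ((k:ℝ)+1) ((k:ℝ)+2)) ((k:ℝ)+1) :=
    ⟨left_mem_Icc.2 (by linarith), fun y hy => hy.1⟩
  calc eVariationOn u0 (Icc a (a+1)) ≤ eVariationOn u0 (Icc (k:ℝ) ((k:ℝ)+2)) :=
        eVariationOn.mono _ h1
    _ = eVariationOn u0 (Icc (k:ℝ) ((k:ℝ)+1)) + eVariationOn u0 (Icc ((k:ℝ)+1) ((k:ℝ)+2)) := by
        rw [hunion, eVariationOn.union u0 hg hl]
    _ = eVariationOn u0 (Icc 0 1) + eVariationOn u0 (Icc 0 1) := by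
        rw [show Icc (k:ℝ) ((k:ℝ)+1) = Icc (0 + (k:ℝ)) (1 + (k:ℝ)) by ring_nf,
          evar_shift u0 hper k 0 1,
          show Icc ((k:ℝ)+1) ((k:ℝ)+2) = Icc (0 + ((k+1:ℤ):ℝ)) (1 + ((k+1:ℤ):ℝ)) by
            push_cast; ring_nf,
          evar_shift u0 hper (k+1) 0 1]
    _ = 2 * eVariationOn u0 (Icc 0 1) := (two_mul _).symm

lemma abs_comb (p q r s w : ℝ) :
    |1/2*p + 1/2*q + 1/2*r + 1/2*(s - w)| ≤ 1/2*|p| + |q| + |r| + |s| + |w| := by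
  have h1 := le_abs_self p; have h2 := neg_abs_le p
  have h3 := le_abs_self q; have h4 := neg_abs_le q
  have h5 := le_abs_self r; have h6 := neg_abs_le r
  have h7 := le_abs_self s; have h8 := neg_abs_le s
  have h9 := le_abs_self w; have h10 := neg_abs_le w
  refine abs_le.2 ⟨by linarith, by linarith⟩

/-- for the 1D sine-Gordon equation on the torus with initial data
u₀ ∈ BV ∩ L^∞ and ∂_t u(0) = v₀ a finite (signed) Borel measure, the solution — given through
its periodic extension by the d'Alembert/Duhamel formula — satisfies u(t) ∈ BV ∩ L^∞ and
‖u(t)‖_BV + ‖u(t)‖_{L^∞} ≲ T² + ‖u₀‖_BV + ‖u₀‖_{L^∞} + ‖v₀‖_M for all t ∈ [0,T]. -/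
theorem sineGordon_BV_bound :
    ∃ C : ℝ, 0 < C ∧ ∀ (T : ℝ), 0 < T → ∀ (u : ℝ → ℝ → ℝ) (u0 : ℝ → ℝ)
      (v0 : MeasureTheory.SignedMeasure ℝ),
      (∀ x : ℝ, u0 (x + 1) = u0 x) →
      (∀ t x : ℝ, u t (x + 1) = u t x) →
      Measurable (Function.uncurry u) →
      bvNormR u0 ≠ ⊤ → supNormR u0 ≠ ⊤ →
      (∀ t ∈ Set.Icc (0:ℝ) T, ∀ x : ℝ,
        u t x = (1/2) * (∫ s in (0:ℝ)..t, ∫ y in (x - t + s)..(x + t - s), Real.sin (u s y))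
          + (1/2) * (u0 (x + t) + u0 (x - t))
          + (1/2) * v0 (Set.Ioc (x - t) (x + t))) →
      ∀ t ∈ Set.Icc (0:ℝ) T,
        (bvNormR (u t) ≠ ⊤ ∧ supNormR (u t) ≠ ⊤) ∧
        bvNormR (u t) + supNormR (u t) ≤
          ENNReal.ofReal C * (ENNReal.ofReal (T^2) + bvNormR u0 + supNormR u0
            + v0.totalVariation Set.univ) := by
  refine ⟨100, by norm_num, ?_⟩
  intro T hT u u0 v0 hper0 hperu hmeas hbv0 hsup0 hform t ht
  obtain ⟨ht0, htT⟩ := ht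
  -- real bounds for the data
  set S : ℝ := (supNormR u0).toReal with hSdef
  have hSnn : 0 ≤ S := ENNReal.toReal_nonneg
  have hS0 : supNormR u0 = ENNReal.ofReal S := (ENNReal.ofReal_toReal hsup0).symm
  have hS : ∀ z, |u0 z| ≤ S := by
    intro z
    have h1 : (‖u0 z‖₊ : ℝ≥0∞) ≤ supNormR u0 := le_iSup (fun x : ℝ => (‖u0 x‖₊ : ℝ≥0∞)) z
    rw [hS0, ← enorm_eq_nnnorm, ← ofReal_norm, Real.norm_eq_abs] at h1
    exact (ENNReal.ofReal_le_ofReal_iff hSnn).1 h1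
  set M : ℝ := (v0.totalVariation univ).toReal with hMdef
  have hMnn : 0 ≤ M := ENNReal.toReal_nonneg
  have hM0 : v0.totalVariation univ = ENNReal.ofReal M :=
    (ENNReal.ofReal_toReal (tv_ne_top v0 univ)).symm
  have hMA : ∀ A : Set ℝ, MeasurableSet A → |v0 A| ≤ M := by
    intro A hA
    have h1 : ENNReal.ofReal |v0 A| ≤ v0.totalVariation univ :=
      (abs_sm_le v0 A hA).trans (measure_mono (subset_univ A))
    rw [hM0] at h1
    exact (ENNReal.ofReal_le_ofReal_iff hMnn).1 h1
  -- measurability of sections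
  have humeas : ∀ s : ℝ, Measurable (u s) := fun s => hmeas.comp measurable_prodMk_left
  have hsinmeas : ∀ s c : ℝ, Measurable (fun y => Real.sin (u s (y + c))) := fun s c =>
    Real.measurable_sin.comp ((humeas s).comp (measurable_add_const c))
  have hsin_int : ∀ s c a b : ℝ,
      IntervalIntegrable (fun y => Real.sin (u s (y + c))) volume a b := by
    intro s c a b
    rw [intervalIntegrable_iff]
    exact Measure.integrableOn_of_bounded measure_Ioc_lt_top.ne
      (hsinmeas s c).aestronglyMeasurable (M := 1) (Filter.Eventually.of_forall fun y => by
        rw [Real.norm_eq_abs]; exact Real.abs_sin_le_one _)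
  have hsin_int' : ∀ s a b : ℝ,
      IntervalIntegrable (fun y => Real.sin (u s y)) volume a b := by
    intro s a b
    simpa using hsin_int s 0 a b
  -- pointwise bound
  have habs : ∀ τ ∈ Set.Icc (0:ℝ) T, ∀ x : ℝ, |u τ x| ≤ τ^2 + S + M := by
    intro τ hτ x
    have hIineq : ‖∫ s in (0:ℝ)..τ, ∫ y in (x - τ + s)..(x + τ - s), Real.sin (u s y)‖
        ≤ 2*τ * |τ - 0| := by
      refine intervalIntegral.norm_integral_le_of_norm_le_const ?_
      intro s hs
      rw [Set.uIoc_of_le hτ.1] at hs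
      have h2 : ‖∫ y in (x - τ + s)..(x + τ - s), Real.sin (u s y)‖
          ≤ 1 * |(x + τ - s) - (x - τ + s)| :=
        intervalIntegral.norm_integral_le_of_norm_le_const fun y _ => by
          rw [Real.norm_eq_abs]; exact Real.abs_sin_le_one _
      have h3 : |(x + τ - s) - (x - τ + s)| = 2*(τ - s) := by
        rw [abs_of_nonneg (by linarith [hs.2])]; ring
      rw [Real.norm_eq_abs]
      calc |∫ y in (x - τ + s)..(x + τ - s), Real.sin (u s y)| ≤ 1 * (2*(τ-s)) := by
            rw [← h3]; exact h2
        _ ≤ 2*τ := by linarith [hs.1.le]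
    rw [hform τ hτ x]
    rw [Real.norm_eq_abs, sub_zero, abs_of_nonneg hτ.1] at hIineq
    have h4 := hS (x + τ)
    have h5 := hS (x - τ)
    have h6 := hMA (Set.Ioc (x - τ) (x + τ)) measurableSet_Ioc
    set a : ℝ := ∫ s in (0:ℝ)..τ, ∫ y in (x - τ + s)..(x + τ - s), Real.sin (u s y) with ha
    set b : ℝ := u0 (x + τ) + u0 (x - τ) with hb
    set c : ℝ := v0 (Set.Ioc (x - τ) (x + τ)) with hc
    have h8 : |(1/2) * a + (1/2) * b + (1/2) * c| ≤ (1/2)*|a| + (1/2)*|b| + (1/2)*|c| := by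
      calc |(1/2) * a + (1/2) * b + (1/2) * c| ≤ |(1/2) * a + (1/2) * b| + |(1/2) * c| :=
            abs_add_le _ _
        _ ≤ (|(1/2) * a| + |(1/2) * b|) + |(1/2) * c| := by gcongr; exact abs_add_le _ _
        _ = (1/2)*|a| + (1/2)*|b| + (1/2)*|c| := by
            have h12 : |(1:ℝ)/2| = 1/2 := abs_of_pos (by norm_num)
            rw [abs_mul, abs_mul, abs_mul, h12]
    have h9 : |b| ≤ S + S := (abs_add_le _ _).trans (by gcongr)
    have h10 : |c| ≤ M := h6
    nlinarith [abs_nonneg a, abs_nonneg b, abs_nonneg c]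
  -- uniform bound R and sine bound J
  set R : ℝ := T^2 + S + M with hRdef
  have hRnn : 0 ≤ R := by positivity
  have hRub : ∀ s ∈ Set.Icc (0:ℝ) T, ∀ y, |u s y| ≤ R := by
    intro s hs y
    refine (habs s hs y).trans ?_
    have h1 : s^2 ≤ T^2 := by nlinarith [hs.1, hs.2]
    simp only [hRdef]
    linarith
  set J : ℝ := min 1 R with hJdef
  have hJnn : 0 ≤ J := le_min zero_le_one hRnn
  have hJ1 : J ≤ 1 := min_le_left _ _
  have hJR : J ≤ R := min_le_right _ _
  have hsinJ : ∀ s ∈ Set.Icc (0:ℝ) T, ∀ y, |Real.sin (u s y)| ≤ J := fun s hs y =>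
    le_min (Real.abs_sin_le_one _) (Real.abs_sin_le_abs.trans (hRub s hs y))
  -- integrability of the inner integral as a function of s
  have hI_int : ∀ x : ℝ, IntervalIntegrable
      (fun s => ∫ y in (x - t + s)..(x + t - s), Real.sin (u s y)) volume 0 t := by
    intro x
    rw [intervalIntegrable_iff, Set.uIoc_of_le ht0]
    set F : ℝ × ℝ → ℝ := fun p =>
      Set.indicator (Ioc (x - t + p.1) (x + t - p.1)) (fun y => Real.sin (u p.1 y)) p.2 with hF
    have hFmeas : Measurable F := by
      have hFeq : F = fun p : ℝ × ℝ =>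
          if x - t + p.1 < p.2 ∧ p.2 ≤ x + t - p.1 then Real.sin (u p.1 p.2) else 0 := by
        funext p
        simp only [hF, Set.indicator_apply, Set.mem_Ioc]
      rw [hFeq]
      exact Measurable.ite
        ((measurableSet_lt (measurable_const.add measurable_fst) measurable_snd).inter
          (measurableSet_le measurable_snd (measurable_const.sub measurable_fst)))
        (Real.measurable_sin.comp hmeas) measurable_const
    have hGmeas : StronglyMeasurable fun s => ∫ y, F (s, y) :=
      hFmeas.stronglyMeasurable.integral_prod_right'
    have hGeq : ∀ s ∈ Ioc (0:ℝ) t, (∫ y in (x - t + s)..(x + t - s), Real.sin (u s y))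
        = ∫ y, F (s, y) := by
      intro s hs
      have hab : x - t + s ≤ x + t - s := by linarith [hs.1.le, hs.2]
      rw [intervalIntegral.integral_of_le hab, ← integral_indicator measurableSet_Ioc]
    constructor
    · refine hGmeas.aestronglyMeasurable.restrict.congr ?_
      filter_upwards [ae_restrict_mem measurableSet_Ioc] with s hs using (hGeq s hs).symm
    · refine HasFiniteIntegral.restrict_of_bounded (C := 2*t) measure_Ioc_lt_top ?_
      filter_upwards [ae_restrict_mem measurableSet_Ioc] with s hs
      have h2 : ‖∫ y in (x - t + s)..(x + t - s), Real.sin (u s y)‖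
          ≤ 1 * |(x + t - s) - (x - t + s)| :=
        intervalIntegral.norm_integral_le_of_norm_le_const fun y _ => by
          rw [Real.norm_eq_abs]; exact Real.abs_sin_le_one _
      have h3 : |(x + t - s) - (x - t + s)| = 2*(t - s) := by
        rw [show (x + t - s) - (x - t + s) = 2*(t-s) by ring,
          abs_of_nonneg (by linarith [hs.2])]
      refine h2.trans ?_
      rw [h3]
      linarith [hs.1.le]
  -- Lipschitz bound for the Duhamel term
  have hLip : ∀ a b : ℝ, a ≤ b →
      |(∫ s in (0:ℝ)..t, ∫ y in (b - t + s)..(b + t - s), Real.sin (u s y))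
        - ∫ s in (0:ℝ)..t, ∫ y in (a - t + s)..(a + t - s), Real.sin (u s y)|
      ≤ 2*J*t*(b-a) := by
    intro a b hab
    rw [← intervalIntegral.integral_sub (hI_int b) (hI_int a)]
    have key : ∀ s ∈ Set.uIoc (0:ℝ) t,
        ‖(∫ y in (b - t + s)..(b + t - s), Real.sin (u s y))
          - ∫ y in (a - t + s)..(a + t - s), Real.sin (u s y)‖ ≤ 2*J*(b-a) := by
      intro s hs
      rw [Set.uIoc_of_le ht0] at hs
      have hsIcc : s ∈ Set.Icc (0:ℝ) T := ⟨hs.1.le, hs.2.trans htT⟩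
      have h1 : (∫ y in (a - t + s)..(b + t - s), Real.sin (u s y))
          = (∫ y in (a - t + s)..(b - t + s), Real.sin (u s y))
            + ∫ y in (b - t + s)..(b + t - s), Real.sin (u s y) :=
        (intervalIntegral.integral_add_adjacent_intervals (hsin_int' s _ _)
          (hsin_int' s _ _)).symm
      have h2 : (∫ y in (a - t + s)..(b + t - s), Real.sin (u s y))
          = (∫ y in (a - t + s)..(a + t - s), Real.sin (u s y))
            + ∫ y in (a + t - s)..(b + t - s), Real.sin (u s y) :=
        (intervalIntegral.integral_add_adjacent_intervals (hsin_int' s _ _)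
          (hsin_int' s _ _)).symm
      have h3 : (∫ y in (a + t - s)..(b + t - s), Real.sin (u s y))
          = ∫ y in (a - t + s)..(b - t + s), Real.sin (u s (y + 2*(t-s))) := by
        rw [intervalIntegral.integral_comp_add_right (fun y => Real.sin (u s y)) (2*(t-s))]
        congr 1 <;> ring
      have h4 : (∫ y in (a - t + s)..(b - t + s), Real.sin (u s (y + 2*(t-s))))
          - (∫ y in (a - t + s)..(b - t + s), Real.sin (u s y))
          = ∫ y in (a - t + s)..(b - t + s),
              (Real.sin (u s (y + 2*(t-s))) - Real.sin (u s y)) :=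
        (intervalIntegral.integral_sub (hsin_int s (2*(t-s)) _ _) (hsin_int' s _ _)).symm
      have h5 : ‖∫ y in (a - t + s)..(b - t + s),
          (Real.sin (u s (y + 2*(t-s))) - Real.sin (u s y))‖
          ≤ (2*J) * |(b - t + s) - (a - t + s)| :=
        intervalIntegral.norm_integral_le_of_norm_le_const fun y _ => by
          rw [Real.norm_eq_abs]
          calc |Real.sin (u s (y + 2*(t-s))) - Real.sin (u s y)|
              ≤ |Real.sin (u s (y + 2*(t-s)))| + |Real.sin (u s y)| := abs_sub _ _
            _ ≤ J + J := add_le_add (hsinJ s hsIcc _) (hsinJ s hsIcc _)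
            _ = 2*J := by ring
      have h6 : |(b - t + s) - (a - t + s)| = b - a := by
        rw [show (b - t + s) - (a - t + s) = b - a by ring, abs_of_nonneg (by linarith)]
      have heq : (∫ y in (b - t + s)..(b + t - s), Real.sin (u s y))
          - ∫ y in (a - t + s)..(a + t - s), Real.sin (u s y)
          = ∫ y in (a - t + s)..(b - t + s),
              (Real.sin (u s (y + 2*(t-s))) - Real.sin (u s y)) := by
        rw [← h4, ← h3]; linarith [h1, h2]
      rw [Real.norm_eq_abs, heq]
      rw [h6] at h5
      rw [Real.norm_eq_abs] at h5
      exact h5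
    have h7 := intervalIntegral.norm_integral_le_of_norm_le_const key
    rw [Real.norm_eq_abs, sub_zero, abs_of_nonneg ht0] at h7
    calc |∫ s in (0:ℝ)..t, ((∫ y in (b - t + s)..(b + t - s), Real.sin (u s y))
            - ∫ y in (a - t + s)..(a + t - s), Real.sin (u s y))| ≤ 2*J*(b-a)*t := h7
      _ = 2*J*t*(b-a) := by ring
  -- per-step estimate
  have hstep : ∀ a b : ℝ, a ≤ b → |u t b - u t a| ≤ 2*J*t*(b-a)
      + |u0 (b + t) - u0 (a + t)| + |u0 (b - t) - u0 (a - t)|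
      + |v0 (Ioc (a + t) (b + t))| + |v0 (Ioc (a - t) (b - t))| := by
    intro a b hab
    have hv : (v0 (Ioc (b - t) (b + t)) : ℝ) - v0 (Ioc (a - t) (a + t))
        = v0 (Ioc (a + t) (b + t)) - v0 (Ioc (a - t) (b - t)) := by
      have e1 := sm_Ioc_add v0 (show a - t ≤ a + t by linarith)
        (show a + t ≤ b + t by linarith)
      have e2 := sm_Ioc_add v0 (show a - t ≤ b - t by linarith)
        (show b - t ≤ b + t by linarith)
      linarith
    have hid : u t b - u t a
        = 1/2*((∫ s in (0:ℝ)..t, ∫ y in (b - t + s)..(b + t - s), Real.sin (u s y))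
            - ∫ s in (0:ℝ)..t, ∫ y in (a - t + s)..(a + t - s), Real.sin (u s y))
          + 1/2*(u0 (b + t) - u0 (a + t)) + 1/2*(u0 (b - t) - u0 (a - t))
          + 1/2*((v0 (Ioc (a + t) (b + t)) : ℝ) - v0 (Ioc (a - t) (b - t))) := by
      rw [hform t ⟨ht0, htT⟩ b, hform t ⟨ht0, htT⟩ a]
      linear_combination (1/2) * hv
    rw [hid]
    have h8 := abs_comb
      ((∫ s in (0:ℝ)..t, ∫ y in (b - t + s)..(b + t - s), Real.sin (u s y))
        - ∫ s in (0:ℝ)..t, ∫ y in (a - t + s)..(a + t - s), Real.sin (u s y))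
      (u0 (b + t) - u0 (a + t)) (u0 (b - t) - u0 (a - t))
      (v0 (Ioc (a + t) (b + t))) (v0 (Ioc (a - t) (b - t)))
    have h9 := hLip a b hab
    have h10 : (0:ℝ) ≤ 2*J*t*(b-a) :=
      mul_nonneg (by positivity) (sub_nonneg.2 hab)
    refine h8.trans ?_
    linarith
  -- variation bound
  have hvar : eVariationOn (u t) (Icc 0 1)
      ≤ ENNReal.ofReal (2*J*t) + 2 * eVariationOn u0 (Icc 0 1)
        + 2 * eVariationOn u0 (Icc 0 1)
        + v0.totalVariation univ + v0.totalVariation univ := by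
    refine iSup_le ?_
    rintro ⟨n, w, hw, ws⟩
    have key : ∀ i : ℕ, edist (u t (w (i+1))) (u t (w i))
        ≤ ENNReal.ofReal (2*J*t*(w (i+1) - w i))
          + edist (u0 (w (i+1) + t)) (u0 (w i + t))
          + edist (u0 (w (i+1) - t)) (u0 (w i - t))
          + v0.totalVariation (Ioc (w i + t) (w (i+1) + t))
          + v0.totalVariation (Ioc (w i - t) (w (i+1) - t)) := by
      intro i
      have hwi : w i ≤ w (i+1) := hw (Nat.le_succ i)
      have h1 := hstep (w i) (w (i+1)) hwi
      calc edist (u t (w (i+1))) (u t (w i))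
          = ENNReal.ofReal |u t (w (i+1)) - u t (w i)| := by rw [edist_dist, Real.dist_eq]
        _ ≤ ENNReal.ofReal (2*J*t*(w (i+1) - w i)
            + |u0 (w (i+1) + t) - u0 (w i + t)| + |u0 (w (i+1) - t) - u0 (w i - t)|
            + |v0 (Ioc (w i + t) (w (i+1) + t))| + |v0 (Ioc (w i - t) (w (i+1) - t))|) :=
            ENNReal.ofReal_le_ofReal h1
        _ ≤ ENNReal.ofReal (2*J*t*(w (i+1) - w i))
            + ENNReal.ofReal |u0 (w (i+1) + t) - u0 (w i + t)|
            + ENNReal.ofReal |u0 (w (i+1) - t) - u0 (w i - t)|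
            + ENNReal.ofReal |v0 (Ioc (w i + t) (w (i+1) + t))|
            + ENNReal.ofReal |v0 (Ioc (w i - t) (w (i+1) - t))| := by
            refine le_trans ENNReal.ofReal_add_le (add_le_add ?_ le_rfl)
            refine le_trans ENNReal.ofReal_add_le (add_le_add ?_ le_rfl)
            refine le_trans ENNReal.ofReal_add_le (add_le_add ?_ le_rfl)
            exact ENNReal.ofReal_add_le
        _ ≤ _ := by
            refine add_le_add (add_le_add (add_le_add (add_le_add le_rfl ?_) ?_) ?_) ?_
            · exact le_of_eq (by rw [edist_dist, Real.dist_eq])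
            · exact le_of_eq (by rw [edist_dist, Real.dist_eq])
            · exact abs_sm_le v0 _ measurableSet_Ioc
            · exact abs_sm_le v0 _ measurableSet_Ioc
    calc ∑ i ∈ Finset.range n, edist (u t (w (i+1))) (u t (w i))
        ≤ ∑ i ∈ Finset.range n, (ENNReal.ofReal (2*J*t*(w (i+1) - w i))
          + edist (u0 (w (i+1) + t)) (u0 (w i + t))
          + edist (u0 (w (i+1) - t)) (u0 (w i - t))
          + v0.totalVariation (Ioc (w i + t) (w (i+1) + t))
          + v0.totalVariation (Ioc (w i - t) (w (i+1) - t))) :=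
          Finset.sum_le_sum fun i _ => key i
      _ = (∑ i ∈ Finset.range n, ENNReal.ofReal (2*J*t*(w (i+1) - w i)))
          + (∑ i ∈ Finset.range n, edist (u0 (w (i+1) + t)) (u0 (w i + t)))
          + (∑ i ∈ Finset.range n, edist (u0 (w (i+1) - t)) (u0 (w i - t)))
          + (∑ i ∈ Finset.range n, v0.totalVariation (Ioc (w i + t) (w (i+1) + t)))
          + (∑ i ∈ Finset.range n, v0.totalVariation (Ioc (w i - t) (w (i+1) - t))) := by
          simp [Finset.sum_add_distrib]
      _ ≤ ENNReal.ofReal (2*J*t) + 2 * eVariationOn u0 (Icc 0 1)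
          + 2 * eVariationOn u0 (Icc 0 1)
          + v0.totalVariation univ + v0.totalVariation univ := by
          refine add_le_add (add_le_add (add_le_add (add_le_add ?_ ?_) ?_) ?_) ?_
          · have hnn : ∀ i ∈ Finset.range n, 0 ≤ 2*J*t*(w (i+1) - w i) := fun i _ =>
              mul_nonneg (by positivity) (sub_nonneg.2 (hw (Nat.le_succ i)))
            rw [← ENNReal.ofReal_sum_of_nonneg hnn]
            refine ENNReal.ofReal_le_ofReal ?_
            rw [← Finset.mul_sum, Finset.sum_range_sub]
            have h0 := ws 0
            have hn := ws n
            have : w n - w 0 ≤ 1 := by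
              have := h0.1; have := hn.2; simp only [Set.mem_Icc] at *; linarith
            nlinarith [mul_nonneg (mul_nonneg (by norm_num : (0:ℝ) ≤ 2) hJnn) ht0]
          · refine le_trans (eVariationOn.sum_le (f := u0) (s := Icc t (t+1)) (n := n)
              (u := fun i => w i + t)
              (fun i j hij => add_le_add_left (hw hij) t)
              (fun i => by
                obtain ⟨h1, h2⟩ := ws i
                exact ⟨by linarith, by linarith⟩)) ?_
            exact evar_window u0 hper0 t
          · refine le_trans (eVariationOn.sum_le (f := u0) (s := Icc (-t) (-t+1)) (n := n)
              (u := fun i => w i - t)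
              (fun i j hij => by have := hw hij; simp only; linarith)
              (fun i => by
                obtain ⟨h1, h2⟩ := ws i
                exact ⟨by linarith, by linarith⟩)) ?_
            exact evar_window u0 hper0 (-t)
          · rw [sum_measure_Ioc v0.totalVariation
              (a := fun i => w i + t) (fun i j hij => add_le_add_left (hw hij) t) n]
            exact measure_mono (subset_univ _)
          · rw [sum_measure_Ioc v0.totalVariation
              (a := fun i => w i - t) (fun i j hij => by have := hw hij; simp only; linarith) n]
            exact measure_mono (subset_univ _)
  -- assembly
  set X : ℝ≥0∞ := ENNReal.ofReal (T^2) + bvNormR u0 + supNormR u0 + v0.totalVariation univ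
    with hX
  have hXne : X ≠ ⊤ := by
    rw [hX]
    refine ENNReal.add_ne_top.2 ⟨ENNReal.add_ne_top.2 ⟨ENNReal.add_ne_top.2
      ⟨ENNReal.ofReal_ne_top, hbv0⟩, hsup0⟩, tv_ne_top v0 univ⟩
  have hbvX : bvNormR u0 ≤ X := by
    rw [hX]
    exact le_add_self.trans (le_self_add.trans le_self_add)
  have htvX : v0.totalVariation univ ≤ X := le_add_self
  have hsupR : supNormR (u t) ≤ ENNReal.ofReal R := by
    refine iSup_le fun x => ?_
    rw [← enorm_eq_nnnorm, ← ofReal_norm, Real.norm_eq_abs]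
    exact ENNReal.ofReal_le_ofReal (hRub t ⟨ht0, htT⟩ x)
  have hRX : ENNReal.ofReal R ≤ X := by
    have e1 : ENNReal.ofReal R = ENNReal.ofReal (T^2) + supNormR u0 + v0.totalVariation univ := by
      rw [hRdef, ENNReal.ofReal_add (by positivity) hMnn,
        ENNReal.ofReal_add (by positivity) hSnn, hS0, hM0]
    rw [e1, hX]
    refine add_le_add_left (add_le_add_left ?_ _) _
    exact le_self_add.trans (le_of_eq rfl) |>.trans (by
      exact le_of_eq rfl) |>.trans le_rfl
  have hL1 : (∫⁻ x in Ioc (0:ℝ) 1, (‖u t x‖₊ : ℝ≥0∞)) ≤ ENNReal.ofReal R := by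
    calc (∫⁻ x in Ioc (0:ℝ) 1, (‖u t x‖₊ : ℝ≥0∞))
        ≤ ∫⁻ _ in Ioc (0:ℝ) 1, ENNReal.ofReal R := by
          refine lintegral_mono fun x => ?_
          rw [← enorm_eq_nnnorm, ← ofReal_norm, Real.norm_eq_abs]
          exact ENNReal.ofReal_le_ofReal (hRub t ⟨ht0, htT⟩ x)
      _ = ENNReal.ofReal R * volume (Ioc (0:ℝ) 1) := setLIntegral_const _ _
      _ = ENNReal.ofReal R := by rw [Real.volume_Ioc]; norm_num
  have hE0 : eVariationOn u0 (Icc (0:ℝ) 1) ≤ bvNormR u0 := le_add_self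
  have hJtX : ENNReal.ofReal (2*J*t) ≤ 2 * X := by
    have hreal : 2*J*t ≤ 2*(T^2 + S + M) := by
      rcases le_or_gt 1 T with h | h
      · nlinarith
      · nlinarith
    calc ENNReal.ofReal (2*J*t) ≤ ENNReal.ofReal (2*(T^2+S+M)) :=
          ENNReal.ofReal_le_ofReal hreal
      _ = 2 * ENNReal.ofReal (T^2+S+M) := by
          rw [ENNReal.ofReal_mul (by norm_num)]
          norm_num
      _ ≤ 2 * X := mul_le_mul_right hRX 2
  have hbvt : bvNormR (u t) ≤ 9 * X := by
    show (∫⁻ x in Ioc (0:ℝ) 1, (‖u t x‖₊ : ℝ≥0∞)) + eVariationOn (u t) (Icc 0 1) ≤ 9 * X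
    calc (∫⁻ x in Ioc (0:ℝ) 1, (‖u t x‖₊ : ℝ≥0∞)) + eVariationOn (u t) (Icc 0 1)
        ≤ ENNReal.ofReal R + (ENNReal.ofReal (2*J*t) + 2 * eVariationOn u0 (Icc 0 1)
          + 2 * eVariationOn u0 (Icc 0 1) + v0.totalVariation univ
          + v0.totalVariation univ) := add_le_add hL1 hvar
      _ ≤ X + (2*X + 2*X + 2*X + X + X) := by
          refine add_le_add hRX (add_le_add (add_le_add (add_le_add (add_le_add hJtX ?_) ?_)
            htvX) htvX)
          · exact mul_le_mul_right (hE0.trans hbvX) 2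
          · exact mul_le_mul_right (hE0.trans hbvX) 2
      _ = 9 * X := by ring
  have hsupt : supNormR (u t) ≤ X := hsupR.trans hRX
  refine ⟨⟨?_, ?_⟩, ?_⟩
  · exact ne_top_of_le_ne_top (ENNReal.mul_ne_top (by norm_num) hXne) hbvt
  · exact ne_top_of_le_ne_top hXne hsupt
  · calc bvNormR (u t) + supNormR (u t) ≤ 9 * X + X := add_le_add hbvt hsupt
      _ = 10 * X := by ring
      _ ≤ ENNReal.ofReal 100 * X := by
          refine mul_le_mul_left ?_ X
          rw [show ((100:ℝ)) = ((100:ℕ):ℝ) by norm_num, ENNReal.ofReal_natCast]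
          norm_num
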